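/- Let (w_0,…,w_{2n} | a_0,…,a_{2n}) be a rational solution of a (2n+1)-cyclic dressing chain with shift Δ ≠ 0, with each w_i + w_{i+1} not identically zero, and let ζ ∈ ℂ be a pole of some w_i. Then for every j = 0,…,2n there exist an integer m_j with |m_j| ≤ n and a function g_j analytic in a neighbourhood of ζ such that w_j(z) = m_j/(z − ζ) + g_j(z) on a punctured neighbourhood of ζ, and moreover m_j · g_j(ζ) = 0. (Equivalently: Res_ζ w_j ∈ ℤ with |Res_ζ w_j| ≤ n, and Res_ζ w_j² = 0.) -/

import Mathlib

open Filter Polynomial Topology Finset Fin.NatCast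

lemma eval_zero_of_ev {E : ℂ → ℂ} {ζ : ℂ} (hc : ContinuousAt E ζ)
    (h0 : ∀ᶠ z in nhdsWithin ζ {ζ}ᶜ, E z = 0) : E ζ = 0 := by
  have h1 : Tendsto E (𝓝[≠] ζ) (𝓝 (E ζ)) := hc.continuousWithinAt.tendsto
  have h2 : Tendsto E (𝓝[≠] ζ) (𝓝 0) :=
    Tendsto.congr' (by filter_upwards [h0] with z hz using hz.symm) tendsto_const_nhds
  exact tendsto_nhds_unique h1 h2

lemma poly_analyticAt (P : Polynomial ℂ) (x : ℂ) : AnalyticAt ℂ (fun z => P.eval z) x :=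
  AnalyticOnNhd.eval_polynomial P x (Set.mem_univ x)

lemma poly_contAt (P : Polynomial ℂ) (x : ℂ) : ContinuousAt (fun z => P.eval z) x :=
  (poly_analyticAt P x).continuousAt

example (P Q : Polynomial ℂ) (x : ℂ) (h : Q.eval x ≠ 0) :
    AnalyticAt ℂ (fun z => P.eval z / Q.eval z) x :=
  (poly_analyticAt P x).div (poly_analyticAt Q x) h

example (P : Polynomial ℂ) (x : ℂ) : HasDerivAt (fun z => P.eval z) (P.derivative.eval x) x :=
  P.hasDerivAt x

lemma cyc_const {N : ℕ} [NeZero N] {β : Type*} (f : Fin N → β)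
    (h : ∀ i, f (i + 1) = f i) (j k : Fin N) : f j = f k := by
  suffices H : ∀ j : Fin N, f j = f 0 by rw [H j, H k]
  intro j
  have H : ∀ t : ℕ, f (t : Fin N) = f 0 := by
    intro t
    induction t with
    | zero => norm_num
    | succ t ih =>
      have e : ((t + 1 : ℕ) : Fin N) = (t : Fin N) + 1 := by push_cast; ring
      rw [e, h]; exact ih
  have := H j.val
  rwa [Fin.cast_val_eq_self] at this
lemma comb_parity (n : ℕ) (α : Fin (2 * n + 1) → ℂ)
    (hsq : ∀ i, α (i + 1) ^ 2 = α i ^ 2)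
    (hsum : ∑ i, α i = 0)
    (j₀ : Fin (2 * n + 1)) (hj₀ : α j₀ ≠ 0) : False := by
  have hall : ∀ j, α j ^ 2 = α j₀ ^ 2 := fun j =>
    cyc_const (fun i => α i ^ 2) hsq j j₀
  set σ : Fin (2 * n + 1) → ℂ := fun j => α j / α j₀ with hσdef
  have hσ : ∀ j, σ j = 1 ∨ σ j = -1 := by
    intro j
    have h2 : (σ j - 1) * (σ j + 1) = 0 := by
      have h1 : σ j ^ 2 = 1 := by
        simp only [hσdef, div_pow, hall j, div_self (pow_ne_zero 2 hj₀)]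
      linear_combination h1
    rcases mul_eq_zero.mp h2 with h | h
    · left; linear_combination h
    · right; linear_combination h
  have hsumσ : ∑ j, σ j = 0 := by
    simp only [hσdef, ← Finset.sum_div, hsum, zero_div]
  set S := Finset.univ.filter (fun j => σ j = 1) with hS
  set T := Finset.univ.filter (fun j => ¬ σ j = 1) with hT
  have hsplit : ∑ j ∈ S, σ j + ∑ j ∈ T, σ j = 0 := by
    rw [Finset.sum_filter_add_sum_filter_not]; exact hsumσ
  have hSsum : ∑ j ∈ S, σ j = (S.card : ℂ) := by
    rw [Finset.sum_congr rfl (fun j hj => (Finset.mem_filter.mp hj).2)]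
    simp [hS]
  have hTsum : ∑ j ∈ T, σ j = -(T.card : ℂ) := by
    rw [Finset.sum_congr rfl (fun j hj => ((hσ j).resolve_left (Finset.mem_filter.mp hj).2 :
      σ j = -1))]
    simp [hT]
  have hcard : S.card + T.card = 2 * n + 1 := by
    rw [hS, hT, Finset.card_filter_add_card_filter_not]
    simp
  have : (S.card : ℂ) = (T.card : ℂ) := by linear_combination hsplit - hSsum - hTsum
  have : S.card = T.card := by exact_mod_cast this
  omega
lemma comb_int (n : ℕ) (c : Fin (2 * n + 1) → ℂ)
    (hstep : ∀ i, c (i + 1) = -c i ∨ c (i + 1) = c i + 1)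
    (hsum : ∑ i, c i = 0) :
    ∃ M : Fin (2 * n + 1) → ℤ, (∀ j, c j = (M j : ℂ)) ∧ (∃ i, M i = 0) ∧
      ∀ j, (M j).natAbs ≤ n := by
  have hNpos : 0 < 2 * n + 1 := by omega
  -- step invariant
  have inv : ∀ t : ℕ, ∃ k : ℤ,
      (c (t : Fin (2 * n + 1)) = c 0 + (k : ℂ) ∧ (k - t) % 2 = 0) ∨
      (c (t : Fin (2 * n + 1)) = -c 0 + (k : ℂ) ∧ (k - t) % 2 = 1) := by
    intro t
    induction t with
    | zero => exact ⟨0, Or.inl ⟨by norm_num, by norm_num⟩⟩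
    | succ t ih =>
      obtain ⟨k, hk⟩ := ih
      have e : ((t + 1 : ℕ) : Fin (2 * n + 1)) = (t : Fin (2 * n + 1)) + 1 := by push_cast; ring
      rcases hstep (t : Fin (2 * n + 1)) with hs | hs <;> rcases hk with ⟨hv, hp⟩ | ⟨hv, hp⟩
      · exact ⟨-k, Or.inr ⟨by rw [e, hs, hv]; push_cast; ring, by omega⟩⟩
      · exact ⟨-k, Or.inl ⟨by rw [e, hs, hv]; push_cast; ring, by omega⟩⟩
      · exact ⟨k + 1, Or.inl ⟨by rw [e, hs, hv]; push_cast; ring, by omega⟩⟩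
      · exact ⟨k + 1, Or.inr ⟨by rw [e, hs, hv]; push_cast; ring, by omega⟩⟩
  -- at t = N we get integrality of c 0
  have hc0 : ∃ m : ℤ, c 0 = (m : ℂ) := by
    obtain ⟨k, hk⟩ := inv (2 * n + 1)
    have eN : ((2 * n + 1 : ℕ) : Fin (2 * n + 1)) = 0 := Fin.natCast_self (2 * n + 1)
    rcases hk with ⟨hv, hp⟩ | ⟨hv, hp⟩
    · rw [eN] at hv
      have : (k : ℂ) = 0 := by linear_combination -hv
      have hk0 : k = 0 := by exact_mod_cast this
      omega
    · rw [eN] at hv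
      have hke : k % 2 = 0 := by omega
      obtain ⟨l, hl⟩ : ∃ l, k = 2 * l := ⟨k / 2, by omega⟩
      refine ⟨l, ?_⟩
      have h2 : (2 : ℂ) * c 0 = (k : ℂ) := by linear_combination hv
      rw [hl] at h2; push_cast at h2
      have := mul_left_cancel₀ (two_ne_zero (α := ℂ)) h2
      exact this
  -- integrality everywhere
  have hint : ∀ j : Fin (2 * n + 1), ∃ m : ℤ, c j = (m : ℂ) := by
    have H : ∀ t : ℕ, ∃ m : ℤ, c (t : Fin (2 * n + 1)) = (m : ℂ) := by
      intro t
      induction t with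
      | zero => exact hc0
      | succ t ih =>
        obtain ⟨m, hm⟩ := ih
        have e : ((t + 1 : ℕ) : Fin (2 * n + 1)) = (t : Fin (2 * n + 1)) + 1 := by push_cast; ring
        rcases hstep (t : Fin (2 * n + 1)) with hs | hs
        · exact ⟨-m, by rw [e, hs, hm]; push_cast; ring⟩
        · exact ⟨m + 1, by rw [e, hs, hm]; push_cast; ring⟩
    intro j
    have := H j.val
    rwa [Fin.cast_val_eq_self] at this
  choose M hM using hint
  have hstepM : ∀ i, M (i + 1) = -M i ∨ M (i + 1) = M i + 1 := by
    intro i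
    rcases hstep i with hs | hs
    · left; have : ((M (i+1) : ℂ)) = ((-M i : ℤ) : ℂ) := by rw [← hM, hs, hM]; push_cast; ring
      exact_mod_cast this
    · right; have : ((M (i+1) : ℂ)) = ((M i + 1 : ℤ) : ℂ) := by rw [← hM, hs, hM]; push_cast; ring
      exact_mod_cast this
  have hsumM : ∑ i, M i = 0 := by
    have : ((∑ i, M i : ℤ) : ℂ) = 0 := by push_cast [← hM]; exact hsum
    exact_mod_cast this
  -- existence of a zero
  have hzero : ∃ i, M i = 0 := by
    by_contra hno
    push_neg at hno
    set s : Fin (2 * n + 1) → ℤ := fun j => if 0 < M j then 1 else -1 with hs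
    have hsflip : ∀ i, M (i + 1) = -M i → s (i + 1) = -s i := by
      intro i hf
      have h1 := hno i
      simp only [hs, hf]
      split_ifs <;> omega
    have hsshift : ∀ i, M (i + 1) = M i + 1 → s (i + 1) = s i := by
      intro i hf
      have h1 := hno i; have h2 := hno (i + 1)
      rw [hf] at h2
      simp only [hs, hf]
      split_ifs <;> omega
    have inv2 : ∀ t : ℕ, ∃ k : ℤ,
        (M (t : Fin (2 * n + 1)) = M 0 + k ∧ (k - t) % 2 = 0 ∧ s (t : Fin (2 * n + 1)) = s 0) ∨
        (M (t : Fin (2 * n + 1)) = -M 0 + k ∧ (k - t) % 2 = 1 ∧ s (t : Fin (2 * n + 1)) = -s 0) := by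
      intro t
      induction t with
      | zero => exact ⟨0, Or.inl ⟨by norm_num, by norm_num, by norm_num⟩⟩
      | succ t ih =>
        obtain ⟨k, hk⟩ := ih
        have e : ((t + 1 : ℕ) : Fin (2 * n + 1)) = (t : Fin (2 * n + 1)) + 1 := by push_cast; ring
        rcases hstepM (t : Fin (2 * n + 1)) with hf | hf <;>
          rcases hk with ⟨hv, hp, hσ⟩ | ⟨hv, hp, hσ⟩
        · exact ⟨-k, Or.inr ⟨by rw [e, hf, hv]; ring, by omega,
            by rw [e, hsflip _ hf, hσ]⟩⟩
        · exact ⟨-k, Or.inl ⟨by rw [e, hf, hv]; ring, by omega,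
            by rw [e, hsflip _ hf, hσ]; ring⟩⟩
        · exact ⟨k + 1, Or.inl ⟨by rw [e, hf, hv]; ring, by omega,
            by rw [e, hsshift _ hf, hσ]⟩⟩
        · exact ⟨k + 1, Or.inr ⟨by rw [e, hf, hv]; ring, by omega,
            by rw [e, hsshift _ hf, hσ]⟩⟩
    obtain ⟨k, hk⟩ := inv2 (2 * n + 1)
    have eN : ((2 * n + 1 : ℕ) : Fin (2 * n + 1)) = 0 := Fin.natCast_self (2 * n + 1)
    have hs0 : s 0 = 1 ∨ s 0 = -1 := by simp only [hs]; split_ifs <;> simp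
    rcases hk with ⟨hv, hp, hσ⟩ | ⟨hv, hp, hσ⟩
    · rw [eN] at hv; omega
    · rw [eN] at hσ; omega
  obtain ⟨i₀, hi₀⟩ := hzero
  refine ⟨M, hM, ⟨i₀, hi₀⟩, ?_⟩
  -- bound
  have fwd : ∀ t : ℕ, (M (i₀ + (t : Fin (2 * n + 1)))).natAbs ≤ t := by
    intro t
    induction t with
    | zero => simp [hi₀]
    | succ t ih =>
      have e : (i₀ + ((t + 1 : ℕ) : Fin (2 * n + 1))) = (i₀ + (t : Fin (2 * n + 1))) + 1 := by
        push_cast; exact (add_assoc _ _ _).symm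
      rw [e]
      rcases hstepM (i₀ + (t : Fin (2 * n + 1))) with hf | hf <;> omega
  have bwd : ∀ t : ℕ, (M (i₀ - (t : Fin (2 * n + 1)))).natAbs ≤ t := by
    intro t
    induction t with
    | zero => simp [hi₀]
    | succ t ih =>
      have e : (i₀ - ((t + 1 : ℕ) : Fin (2 * n + 1))) + 1 = i₀ - (t : Fin (2 * n + 1)) := by
        push_cast; rw [sub_add_eq_sub_sub, sub_add_cancel]
      rcases hstepM (i₀ - ((t + 1 : ℕ) : Fin (2 * n + 1))) with hf | hf <;> rw [e] at hf <;> omega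
  intro j
  set t := (j - i₀).val with ht
  have htlt : t < 2 * n + 1 := (j - i₀).is_lt
  have hjt : i₀ + (t : Fin (2 * n + 1)) = j := by
    rw [ht, Fin.cast_val_eq_self]; exact add_sub_cancel _ _
  by_cases hc : t ≤ n
  · have := fwd t
    rw [hjt] at this
    omega
  · have h2 : ((2 * n + 1 - t : ℕ) : Fin (2 * n + 1)) = -(t : Fin (2 * n + 1)) := by
      have : ((2 * n + 1 - t : ℕ) : Fin (2 * n + 1)) + (t : Fin (2 * n + 1)) = 0 := by
        rw [← Nat.cast_add]
        rw [Nat.sub_add_cancel htlt.le]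
        exact Fin.natCast_self (2 * n + 1)
      exact eq_neg_of_add_eq_zero_left this -- might not work in Fin; fallback below
    have hjt2 : i₀ - ((2 * n + 1 - t : ℕ) : Fin (2 * n + 1)) = j := by
      rw [h2, sub_neg_eq_add, hjt]
    have := bwd (2 * n + 1 - t)
    rw [hjt2] at this
    omega

lemma ratfun_factor (p q : Polynomial ℂ) (hq : q ≠ 0) (ζ : ℂ) :
    ∃ (d : ℤ) (P Q : Polynomial ℂ), Q.eval ζ ≠ 0 ∧
      (p = 0 → P = 0 ∧ d = 0) ∧ (p ≠ 0 → P.eval ζ ≠ 0) ∧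
      ∀ z, z ≠ ζ → q.eval z ≠ 0 →
        Q.eval z ≠ 0 ∧ p.eval z / q.eval z = (z - ζ) ^ d * (P.eval z / Q.eval z) := by
  by_cases hp : p = 0
  · refine ⟨0, 0, 1, by simp, fun _ => ⟨rfl, rfl⟩, fun h => absurd hp h, fun z hz hqz => ?_⟩
    simp [hp]
  · obtain ⟨P, hP, hPnd⟩ := p.exists_eq_pow_rootMultiplicity_mul_and_not_dvd hp ζ
    obtain ⟨Q, hQ, hQnd⟩ := q.exists_eq_pow_rootMultiplicity_mul_and_not_dvd hq ζ
    have hPζ : P.eval ζ ≠ 0 := fun h => hPnd (dvd_iff_isRoot.mpr h)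
    have hQζ : Q.eval ζ ≠ 0 := fun h => hQnd (dvd_iff_isRoot.mpr h)
    set A := p.rootMultiplicity ζ with hA
    set B := q.rootMultiplicity ζ with hB
    refine ⟨(A : ℤ) - B, P, Q, hQζ, fun h => absurd h hp, fun _ => hPζ, fun z hz hqz => ?_⟩
    have ht : z - ζ ≠ 0 := sub_ne_zero.mpr hz
    have hqe : q.eval z = (z - ζ) ^ B * Q.eval z := by
      conv_lhs => rw [hQ]
      simp [eval_mul, eval_pow]
    have hpe : p.eval z = (z - ζ) ^ A * P.eval z := by
      conv_lhs => rw [hP]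
      simp [eval_mul, eval_pow]
    have hQz : Q.eval z ≠ 0 := by
      intro h; rw [hqe, h, mul_zero] at hqz; exact hqz rfl
    refine ⟨hQz, ?_⟩
    rw [hpe, hqe, zpow_sub₀ ht, zpow_natCast, zpow_natCast]
    field_simp
section MainProof

theorem rational_dressing_chain_residues (n : ℕ) (Δ : ℂ) (hΔ : Δ ≠ 0)
    (w : Fin (2 * n + 1) → ℂ → ℂ) (a : Fin (2 * n + 1) → ℂ)
    (p q : Fin (2 * n + 1) → Polynomial ℂ)
    (hq : ∀ i, q i ≠ 0)
    (hcop : ∀ i, IsCoprime (p i) (q i))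
    (hw : ∀ i z, (q i).eval z ≠ 0 → w i z = (p i).eval z / (q i).eval z)
    (hchain : ∀ z : ℂ, (∀ j, (q j).eval z ≠ 0) → ∀ i : Fin (2 * n + 1),
      deriv (fun t => w i t + w (i + 1) t) z + (w (i + 1) z) ^ 2 - (w i z) ^ 2 = a i)
    (hsum : ∑ i, a i = -Δ)
    (hnz : ∀ i : Fin (2 * n + 1), ∃ z : ℂ,
      (∀ j, (q j).eval z ≠ 0) ∧ w i z + w (i + 1) z ≠ 0)
    (ζ : ℂ)
    (hpole : ∃ i₀ : Fin (2 * n + 1),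
      Tendsto (fun z => ‖w i₀ z‖) (nhdsWithin ζ {ζ}ᶜ) atTop) :
    ∀ j : Fin (2 * n + 1), ∃ (m : ℤ) (g : ℂ → ℂ),
      m.natAbs ≤ n ∧ AnalyticAt ℂ g ζ ∧
      (∀ᶠ z in nhdsWithin ζ {ζ}ᶜ, w j z = (m : ℂ) / (z - ζ) + g z) ∧
      (m : ℂ) * g ζ = 0 := by
  classical
  choose d P Q hQζ hdzero hPζ hfac using fun j => ratfun_factor (p j) (q j) (hq j) ζ
  set h : Fin (2 * n + 1) → ℂ → ℂ := fun j z => (P j).eval z / (Q j).eval z with hh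
  set h1 : Fin (2 * n + 1) → ℂ → ℂ := fun j z =>
    ((P j).derivative.eval z * (Q j).eval z - (P j).eval z * (Q j).derivative.eval z) /
      ((Q j).eval z) ^ 2 with hh1
  set U : Set ℂ := {z | z ≠ ζ ∧ ∀ j, (q j).eval z ≠ 0} with hUdef
  have hUopen : IsOpen U := by
    have : U = {ζ}ᶜ ∩ ⋂ j, {z : ℂ | (q j).eval z ≠ 0} := by
      ext z; simp [hUdef, Set.mem_iInter]
    rw [this]
    refine isOpen_compl_singleton.inter (isOpen_iInter_of_finite fun j => ?_)
    have : {z : ℂ | (q j).eval z ≠ 0} = (fun z => (q j).eval z) ⁻¹' ({0}ᶜ) := rfl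
    rw [this]
    exact isOpen_compl_singleton.preimage (q j).continuous_aeval
  have hUmem : ∀ᶠ z in nhdsWithin ζ {ζ}ᶜ, z ∈ U := by
    have hfin : ({z : ℂ | ∃ j, (q j).eval z = 0} \ {ζ}).Finite := by
      apply Set.Finite.diff
      have : {z : ℂ | ∃ j, (q j).eval z = 0} = ⋃ j, {z : ℂ | (q j).IsRoot z} := by
        ext z; simp [IsRoot]
      rw [this]
      exact Set.finite_iUnion fun j => (q j).finite_setOf_isRoot (hq j)
    have hζn : ζ ∉ ({z : ℂ | ∃ j, (q j).eval z = 0} \ {ζ}) := by simp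
    have hnb : ∀ᶠ z in 𝓝 ζ, z ∉ ({z : ℂ | ∃ j, (q j).eval z = 0} \ {ζ}) :=
      hfin.isClosed.isOpen_compl.mem_nhds hζn
    filter_upwards [hnb.filter_mono nhdsWithin_le_nhds, self_mem_nhdsWithin] with z hz1 hz2
    have hz2' : z ≠ ζ := hz2
    refine ⟨hz2', fun j => ?_⟩
    by_contra h0
    exact hz1 ⟨⟨j, h0⟩, hz2'⟩
  have hQz : ∀ z ∈ U, ∀ j, (Q j).eval z ≠ 0 := fun z hz j => (hfac j z hz.1 (hz.2 j)).1
  have hrep : ∀ j, ∀ z ∈ U, w j z = (z - ζ) ^ (d j) * h j z := fun j z hz => by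
    rw [hw j z (hz.2 j)]; exact (hfac j z hz.1 (hz.2 j)).2
  have hderivAt : ∀ j, ∀ z ∈ U, HasDerivAt (w j)
      ((d j : ℂ) * (z - ζ) ^ (d j - 1) * h j z + (z - ζ) ^ (d j) * h1 j z) z := by
    intro j z hz
    have ht : z - ζ ≠ 0 := sub_ne_zero.mpr hz.1
    have h1d : HasDerivAt (fun z => (z - ζ) ^ (d j)) ((d j : ℂ) * (z - ζ) ^ (d j - 1)) z := by
      have hin : HasDerivAt (fun z : ℂ => z - ζ) 1 z := (hasDerivAt_id z).sub_const ζ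
      have hout := hasDerivAt_zpow (d j) (z - ζ) (Or.inl ht)
      have := hout.comp z hin
      simpa [Function.comp_def] using this
    have h2d : HasDerivAt (h j) (h1 j z) z := by
      simpa [hh, hh1] using ((P j).hasDerivAt z).fun_div ((Q j).hasDerivAt z) (hQz z hz j)
    apply (h1d.mul h2d).congr_of_eventuallyEq
    filter_upwards [hUopen.mem_nhds hz] with y hy
    exact hrep j y hy
  have hderiv : ∀ j, ∀ z ∈ U, deriv (w j) z
      = (d j : ℂ) * (z - ζ) ^ (d j - 1) * h j z + (z - ζ) ^ (d j) * h1 j z :=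
    fun j z hz => (hderivAt j z hz).deriv
  have hpair : ∀ z ∈ U, ∀ i : Fin (2 * n + 1),
      deriv (fun t => w i t + w (i + 1) t) z = deriv (w i) z + deriv (w (i + 1)) z :=
    fun z hz i => by
      rw [((hderivAt i z hz).fun_add (hderivAt (i + 1) z hz)).deriv,
        hderiv i z hz, hderiv (i + 1) z hz]
  have hsd : ∀ z ∈ U, ∑ j, deriv (w j) z = -Δ / 2 := by
    intro z hz
    have hc := hchain z hz.2
    have e1 : ∑ i, deriv (fun t => w i t + w (i + 1) t) z = -Δ := by
      have hrw : ∀ i : Fin (2 * n + 1), deriv (fun t => w i t + w (i + 1) t) z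
          = a i - (w (i + 1) z) ^ 2 + (w i z) ^ 2 := fun i => by linear_combination hc i
      rw [Finset.sum_congr rfl fun i _ => hrw i]
      rw [Finset.sum_add_distrib, Finset.sum_sub_distrib]
      have hre : ∑ i : Fin (2 * n + 1), (w (i + 1) z) ^ 2 = ∑ i, (w i z) ^ 2 :=
        Fintype.sum_equiv (Equiv.addRight 1) _ _ (fun i => rfl)
      rw [hre, hsum]
      ring
    have e2 : ∑ i, deriv (fun t => w i t + w (i + 1) t) z = 2 * ∑ j, deriv (w j) z := by
      rw [Finset.sum_congr rfl fun i _ => hpair z hz i, Finset.sum_add_distrib]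
      rw [Fintype.sum_equiv (Equiv.addRight 1) (fun i => deriv (w (i + 1)) z)
        (fun i => deriv (w i) z) (fun i => rfl)]
      ring
    have h2 := e2.symm.trans e1
    linear_combination h2 / 2
  have hch : ∀ j, ContinuousAt (h j) ζ := fun j =>
    ((poly_contAt (P j) ζ).div (poly_contAt (Q j) ζ) (hQζ j))
  have hch1 : ∀ j, ContinuousAt (h1 j) ζ := fun j =>
    (((poly_contAt _ ζ).mul (poly_contAt _ ζ)).sub
      ((poly_contAt _ ζ).mul (poly_contAt _ ζ))).div
      ((poly_contAt (Q j) ζ).pow 2) (pow_ne_zero 2 (hQζ j))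
  have hpowc : ∀ (x : ℂ) (e : ℕ), ContinuousAt (fun z : ℂ => (z - x) ^ e) x := fun x e =>
    ((continuousAt_id.sub continuousAt_const).pow e)
  -- Phase 1: all poles are simple
  have hdlb : ∀ j, -1 ≤ d j := by
    by_contra hcon
    push_neg at hcon
    obtain ⟨jbad, hjbad⟩ := hcon
    set K : ℕ := Finset.univ.sup (fun j => (-d j).toNat) with hKdef
    have hK2 : 2 ≤ K := by
      have hle : (-d jbad).toNat ≤ K := Finset.le_sup (f := fun j => (-d j).toNat) (Finset.mem_univ jbad)
      omega
    have hKb : ∀ j, -(K : ℤ) ≤ d j := by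
      intro j
      have hle : (-d j).toNat ≤ K := Finset.le_sup (f := fun j => (-d j).toNat) (Finset.mem_univ j)
      omega
    set m : Fin (2 * n + 1) → ℕ := fun j => (K + d j).toNat with hmdef
    have hm : ∀ j, (m j : ℤ) = K + d j := by
      intro j; have := hKb j; simp only [hmdef]; omega
    set e1 : Fin (2 * n + 1) → ℕ := fun j => (2 * K + d j - 1).toNat with he1def
    set e2 : Fin (2 * n + 1) → ℕ := fun j => (2 * K + d j).toNat with he2def
    have he1 : ∀ j, (e1 j : ℤ) = 2 * K + d j - 1 ∧ e1 j ≠ 0 := by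
      intro j; have := hKb j; simp only [he1def]; omega
    have he2 : ∀ j, (e2 j : ℤ) = 2 * K + d j ∧ e2 j ≠ 0 := by
      intro j; have := hKb j; simp only [he2def]; omega
    have keyD : ∀ z ∈ U, ∀ j, (z - ζ) ^ (2 * K) * deriv (w j) z
        = (d j : ℂ) * (z - ζ) ^ (e1 j) * h j z + (z - ζ) ^ (e2 j) * h1 j z := by
      intro z hz j
      have ht : z - ζ ≠ 0 := sub_ne_zero.mpr hz.1
      rw [hderiv j z hz]
      have A : ((z - ζ) : ℂ) ^ (e1 j) = (z - ζ) ^ (2 * K) * (z - ζ) ^ (d j - 1) := by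
        rw [← zpow_natCast (z - ζ) (e1 j), ← zpow_natCast (z - ζ) (2 * K), ← zpow_add₀ ht]
        congr 1
        have := (he1 j).1; omega
      have B : ((z - ζ) : ℂ) ^ (e2 j) = (z - ζ) ^ (2 * K) * (z - ζ) ^ (d j) := by
        rw [← zpow_natCast (z - ζ) (e2 j), ← zpow_natCast (z - ζ) (2 * K), ← zpow_add₀ ht]
        congr 1
        have := (he2 j).1; omega
      rw [A, B]; ring
    have keyW : ∀ z ∈ U, ∀ j, (z - ζ) ^ (2 * K) * (w j z) ^ 2
        = ((z - ζ) ^ (m j) * h j z) ^ 2 := by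
      intro z hz j
      have ht : z - ζ ≠ 0 := sub_ne_zero.mpr hz.1
      rw [hrep j z hz]
      have C : (z - ζ) ^ (2 * K) * ((z - ζ) ^ (d j) * (z - ζ) ^ (d j))
          = (z - ζ) ^ (m j) * (z - ζ) ^ (m j) := by
        rw [← zpow_natCast (z - ζ) (2 * K), ← zpow_natCast (z - ζ) (m j),
          ← zpow_add₀ ht, ← zpow_add₀ ht, ← zpow_add₀ ht]
        congr 1
        have := hm j; omega
      linear_combination (h j z * h j z) * C
    set E : Fin (2 * n + 1) → ℂ → ℂ := fun i z =>
      (d i : ℂ) * (z - ζ) ^ (e1 i) * h i z + (z - ζ) ^ (e2 i) * h1 i z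
      + (d (i + 1) : ℂ) * (z - ζ) ^ (e1 (i + 1)) * h (i + 1) z
      + (z - ζ) ^ (e2 (i + 1)) * h1 (i + 1) z
      + ((z - ζ) ^ (m (i + 1)) * h (i + 1) z) ^ 2 - ((z - ζ) ^ (m i) * h i z) ^ 2
      - a i * (z - ζ) ^ (2 * K) with hEdef
    have hE0 : ∀ i : Fin (2 * n + 1), ∀ z ∈ U, E i z = 0 := by
      intro i z hz
      have hc := hchain z hz.2 i
      have hp := hpair z hz i
      simp only [hEdef]
      linear_combination (-(keyD z hz i)) - (keyD z hz (i + 1)) - (keyW z hz (i + 1))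
        + (keyW z hz i) + ((z - ζ) ^ (2 * K)) * hc - ((z - ζ) ^ (2 * K)) * hp
    set α : Fin (2 * n + 1) → ℂ := fun j => if m j = 0 then h j ζ else 0 with hαdef
    have hEcont : ∀ i, ContinuousAt (E i) ζ := by
      intro i
      exact (((((((continuousAt_const.mul (hpowc ζ (e1 i))).mul (hch i)).add
        ((hpowc ζ (e2 i)).mul (hch1 i))).add
        ((continuousAt_const.mul (hpowc ζ (e1 (i + 1)))).mul (hch (i + 1)))).add
        ((hpowc ζ (e2 (i + 1))).mul (hch1 (i + 1)))).add
        (((hpowc ζ (m (i + 1))).mul (hch (i + 1))).pow 2)).sub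
        (((hpowc ζ (m i)).mul (hch i)).pow 2)).sub
        (continuousAt_const.mul (hpowc ζ (2 * K)))
    have hsq : ∀ i, α (i + 1) ^ 2 = α i ^ 2 := by
      intro i
      have h0 : E i ζ = 0 := eval_zero_of_ev (hEcont i)
        (by filter_upwards [hUmem] with z hz using hE0 i z hz)
      have hval : E i ζ = α (i + 1) ^ 2 - α i ^ 2 := by
        simp only [hEdef, sub_self]
        rw [zero_pow (he1 i).2, zero_pow (he2 i).2, zero_pow (he1 (i + 1)).2,
          zero_pow (he2 (i + 1)).2, zero_pow (by omega : 2 * K ≠ 0)]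
        simp only [hαdef]
        by_cases h01 : m (i + 1) = 0 <;> by_cases h02 : m i = 0 <;>
          simp [h01, h02, zero_pow] <;> ring
      rw [hval] at h0
      exact sub_eq_zero.mp h0
    -- the summed identity
    have keyD' : ∀ z ∈ U, ∀ j, (z - ζ) ^ (K + 1) * deriv (w j) z
        = (d j : ℂ) * (z - ζ) ^ (m j) * h j z + (z - ζ) ^ (m j + 1) * h1 j z := by
      intro z hz j
      have ht : z - ζ ≠ 0 := sub_ne_zero.mpr hz.1
      rw [hderiv j z hz]
      have A : ((z - ζ) : ℂ) ^ (m j) = (z - ζ) ^ (K + 1) * (z - ζ) ^ (d j - 1) := by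
        rw [← zpow_natCast (z - ζ) (m j), ← zpow_natCast (z - ζ) (K + 1), ← zpow_add₀ ht]
        congr 1
        have := hm j; omega
      have B : ((z - ζ) : ℂ) ^ (m j + 1) = (z - ζ) ^ (K + 1) * (z - ζ) ^ (d j) := by
        rw [← zpow_natCast (z - ζ) (m j + 1), ← zpow_natCast (z - ζ) (K + 1), ← zpow_add₀ ht]
        congr 1
        have := hm j; omega
      rw [A, B]; ring
    set F : ℂ → ℂ := fun z =>
      (∑ j, ((d j : ℂ) * (z - ζ) ^ (m j) * h j z + (z - ζ) ^ (m j + 1) * h1 j z))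
      + (Δ / 2) * (z - ζ) ^ (K + 1) with hFdef
    have hF0 : ∀ z ∈ U, F z = 0 := by
      intro z hz
      simp only [hFdef]
      rw [Finset.sum_congr rfl fun j _ => (keyD' z hz j).symm, ← Finset.mul_sum, hsd z hz]
      ring
    have hFcont : ContinuousAt F ζ := by
      apply ContinuousAt.add
      · exact tendsto_finset_sum _ (fun j _ =>
          ((continuousAt_const.mul (hpowc ζ (m j))).mul (hch j)).add
          ((hpowc ζ (m j + 1)).mul (hch1 j)))
      · exact continuousAt_const.mul (hpowc ζ (K + 1))
    have hFζ : F ζ = -(K : ℂ) * ∑ j, α j := by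
      simp only [hFdef, sub_self]
      rw [zero_pow (by omega : K + 1 ≠ 0)]
      have hterm : ∀ j : Fin (2 * n + 1),
          (d j : ℂ) * (0 : ℂ) ^ (m j) * h j ζ + (0 : ℂ) ^ (m j + 1) * h1 j ζ
          = -(K : ℂ) * α j := by
        intro j
        rw [zero_pow (by omega : m j + 1 ≠ 0)]
        by_cases h0 : m j = 0
        · have hmj := hm j
          have hdj' : d j = -(K : ℤ) := by omega
          have hdj : (d j : ℂ) = -(K : ℂ) := by rw [hdj']; push_cast; ring
          simp [h0, hαdef, hdj]
        · simp [h0, hαdef, zero_pow]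
      rw [Finset.sum_congr rfl fun j _ => hterm j, ← Finset.mul_sum]
      ring
    have hSa : ∑ j, α j = 0 := by
      have h0 : F ζ = 0 := eval_zero_of_ev hFcont
        (by filter_upwards [hUmem] with z hz using hF0 z hz)
      rw [hFζ] at h0
      rcases mul_eq_zero.mp h0 with h | h
      · exfalso
        have : (K : ℂ) ≠ 0 := Nat.cast_ne_zero.mpr (by omega)
        exact this (by linear_combination -h)
      · exact h
    obtain ⟨j₀, -, hj₀K⟩ := Finset.exists_mem_eq_sup Finset.univ Finset.univ_nonempty
      (fun j => (-d j).toNat)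
    have hj₀K' : K = (-d j₀).toNat := hj₀K
    have hd0 : d j₀ = -(K : ℤ) := by omega
    have hp0 : p j₀ ≠ 0 := by
      intro h0
      have := (hdzero j₀ h0).2
      omega
    have hm0 : m j₀ = 0 := by have := hm j₀; omega
    have hα0 : α j₀ ≠ 0 := by
      simp only [hαdef]
      rw [if_pos hm0]
      exact div_ne_zero (hPζ j₀ hp0) (hQζ j₀)
    exact comb_parity n α hsq hSa j₀ hα0
  -- Phase 2: residues
  set c : Fin (2 * n + 1) → ℂ := fun j => if d j < 0 then h j ζ else 0 with hcdef
  set G : Fin (2 * n + 1) → Polynomial ℂ := fun j =>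
    if d j < 0 then (P j - Polynomial.C (h j ζ) * Q j) /ₘ (Polynomial.X - Polynomial.C ζ)
    else (Polynomial.X - Polynomial.C ζ) ^ ((d j).toNat) * P j with hGdef
  set g : Fin (2 * n + 1) → ℂ → ℂ := fun j z => (G j).eval z / (Q j).eval z with hgdef
  set g1 : Fin (2 * n + 1) → ℂ → ℂ := fun j z =>
    ((G j).derivative.eval z * (Q j).eval z - (G j).eval z * (Q j).derivative.eval z) /
      ((Q j).eval z) ^ 2 with hg1def
  have keyG : ∀ j, d j < 0 →
      (Polynomial.X - Polynomial.C ζ) * G j = P j - Polynomial.C (c j) * Q j := by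
    intro j hj
    have hcj : c j = h j ζ := by simp only [hcdef]; rw [if_pos hj]
    have hGj : G j = (P j - Polynomial.C (h j ζ) * Q j) /ₘ (Polynomial.X - Polynomial.C ζ) := by
      simp only [hGdef]; rw [if_pos hj]
    have hmod : (P j - Polynomial.C (h j ζ) * Q j) %ₘ (Polynomial.X - Polynomial.C ζ) = 0 := by
      rw [Polynomial.modByMonic_X_sub_C_eq_C_eval]
      have hev : (P j - Polynomial.C (h j ζ) * Q j).eval ζ = 0 := by
        simp only [Polynomial.eval_sub, Polynomial.eval_mul, Polynomial.eval_C, hh]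
        field_simp [hQζ j]
        simp
      rw [hev, map_zero]
    have hdiv := Polynomial.modByMonic_add_div (P j - Polynomial.C (h j ζ) * Q j)
      (Polynomial.X - Polynomial.C ζ)
    rw [hmod, zero_add] at hdiv
    rw [hGj, hcj, hdiv]
  have hrep2 : ∀ j, ∀ z ∈ U, w j z = c j / (z - ζ) + g j z := by
    intro j z hz
    have ht : z - ζ ≠ 0 := sub_ne_zero.mpr hz.1
    have hQ := hQz z hz j
    by_cases hj : d j < 0
    · have hd1 : d j = -1 := by have := hdlb j; omega
      have hkeyz : (z - ζ) * (G j).eval z = (P j).eval z - c j * (Q j).eval z := by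
        have hev := congrArg (Polynomial.eval z) (keyG j hj)
        simpa using hev
      rw [hrep j z hz, hd1]
      simp only [hgdef, hh]
      rw [zpow_neg_one, div_add_div _ _ ht hQ]
      have hkeyz' : c j * eval z (Q j) + (z - ζ) * eval z (G j) = eval z (P j) := by
        linear_combination hkeyz
      rw [hkeyz', inv_mul_eq_div, div_div, mul_comm (eval z (Q j)) (z - ζ)]
    · push_neg at hj
      have hcj : c j = 0 := by simp only [hcdef]; rw [if_neg (not_lt.mpr hj)]
      have hGj : G j = (Polynomial.X - Polynomial.C ζ) ^ ((d j).toNat) * P j := by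
        simp only [hGdef]; rw [if_neg (not_lt.mpr hj)]
      rw [hrep j z hz, hcj]
      simp only [hgdef, hGj, Polynomial.eval_mul, Polynomial.eval_pow, Polynomial.eval_sub,
        Polynomial.eval_X, Polynomial.eval_C, hh]
      rw [zero_div, zero_add, ← zpow_natCast (z - ζ) ((d j).toNat), Int.toNat_of_nonneg hj,
        mul_div_assoc]
  have hana : ∀ j, AnalyticAt ℂ (g j) ζ := fun j =>
    (poly_analyticAt (G j) ζ).div (poly_analyticAt (Q j) ζ) (hQζ j)
  have hgc : ∀ j, ContinuousAt (g j) ζ := fun j => (hana j).continuousAt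
  have hg1c : ∀ j, ContinuousAt (g1 j) ζ := fun j =>
    (((poly_contAt _ ζ).mul (poly_contAt _ ζ)).sub
      ((poly_contAt _ ζ).mul (poly_contAt _ ζ))).div
      ((poly_contAt (Q j) ζ).pow 2) (pow_ne_zero 2 (hQζ j))
  have hderivAt2 : ∀ j, ∀ z ∈ U, HasDerivAt (w j) (-(c j) / (z - ζ) ^ 2 + g1 j z) z := by
    intro j z hz
    have ht : z - ζ ≠ 0 := sub_ne_zero.mpr hz.1
    have hgd : HasDerivAt (g j) (g1 j z) z := by
      simpa [hgdef, hg1def] using ((G j).hasDerivAt z).fun_div ((Q j).hasDerivAt z) (hQz z hz j)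
    have hinv : HasDerivAt (fun z : ℂ => (z - ζ)⁻¹) (-((z - ζ) ^ 2)⁻¹) z := by
      have hin : HasDerivAt (fun z : ℂ => z - ζ) 1 z := (hasDerivAt_id z).sub_const ζ
      have := (hasDerivAt_inv ht).comp z hin
      simpa [Function.comp_def] using this
    have hsum2 := (hinv.const_mul (c j)).fun_add hgd
    have hval : c j * -((z - ζ) ^ 2)⁻¹ + g1 j z = -(c j) / (z - ζ) ^ 2 + g1 j z := by
      field_simp
    rw [← hval]
    apply hsum2.congr_of_eventuallyEq
    filter_upwards [hUopen.mem_nhds hz] with y hy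
    rw [hrep2 j y hy, div_eq_mul_inv]
  have key1 : ∀ z ∈ U, ∀ j, (z - ζ) ^ 2 * deriv (w j) z = -(c j) + (z - ζ) ^ 2 * g1 j z := by
    intro z hz j
    have ht : z - ζ ≠ 0 := sub_ne_zero.mpr hz.1
    rw [(hderivAt2 j z hz).deriv]
    field_simp
  have key2 : ∀ z ∈ U, ∀ j, (z - ζ) * w j z = c j + (z - ζ) * g j z := by
    intro z hz j
    have ht : z - ζ ≠ 0 := sub_ne_zero.mpr hz.1
    rw [hrep2 j z hz]
    field_simp
  set E2 : Fin (2 * n + 1) → ℂ → ℂ := fun i z =>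
    -(c i) - c (i + 1) + (z - ζ) ^ 2 * (g1 i z + g1 (i + 1) z)
    + (c (i + 1) + (z - ζ) * g (i + 1) z) ^ 2 - (c i + (z - ζ) * g i z) ^ 2
    - a i * (z - ζ) ^ 2 with hE2def
  have hE20 : ∀ i : Fin (2 * n + 1), ∀ z ∈ U, E2 i z = 0 := by
    intro i z hz
    have hc2 := hchain z hz.2 i
    have hp := hpair z hz i
    have k2i : ((z - ζ) * w i z) ^ 2 = (c i + (z - ζ) * g i z) ^ 2 := by
      rw [key2 z hz i]
    have k2i1 : ((z - ζ) * w (i + 1) z) ^ 2 = (c (i + 1) + (z - ζ) * g (i + 1) z) ^ 2 := by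
      rw [key2 z hz (i + 1)]
    simp only [hE2def]
    linear_combination (-(key1 z hz i)) - (key1 z hz (i + 1)) - k2i1 + k2i
      + ((z - ζ) ^ 2) * hc2 - ((z - ζ) ^ 2) * hp
  have rel1 : ∀ i : Fin (2 * n + 1),
      -(c i) - c (i + 1) + c (i + 1) ^ 2 - c i ^ 2 = 0 := by
    intro i
    have hcont : ContinuousAt (E2 i) ζ := by
      exact ((((continuousAt_const.sub continuousAt_const).add
        ((hpowc ζ 2).mul ((hg1c i).add (hg1c (i + 1))))).add
        ((continuousAt_const.add (((continuousAt_id.sub continuousAt_const)).mul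
          (hgc (i + 1)))).pow 2)).sub
        ((continuousAt_const.add (((continuousAt_id.sub continuousAt_const)).mul
          (hgc i))).pow 2)).sub
        (continuousAt_const.mul (hpowc ζ 2))
    have h0 : E2 i ζ = 0 := eval_zero_of_ev hcont
      (by filter_upwards [hUmem] with z hz using hE20 i z hz)
    have hval : E2 i ζ = -(c i) - c (i + 1) + c (i + 1) ^ 2 - c i ^ 2 := by
      simp only [hE2def, sub_self]
      ring
    rw [hval] at h0
    exact h0
  set B : Fin (2 * n + 1) → ℂ → ℂ := fun i z =>
    (z - ζ) * (g1 i z + g1 (i + 1) z) + 2 * c (i + 1) * g (i + 1) z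
    + (z - ζ) * (g (i + 1) z) ^ 2 - 2 * c i * g i z - (z - ζ) * (g i z) ^ 2
    - a i * (z - ζ) with hBdef
  have hB0 : ∀ i : Fin (2 * n + 1), ∀ z ∈ U, B i z = 0 := by
    intro i z hz
    have ht : z - ζ ≠ 0 := sub_ne_zero.mpr hz.1
    have hmul : (z - ζ) * B i z = 0 := by
      simp only [hBdef]
      linear_combination (hE20 i z hz) - (rel1 i)
    exact (mul_eq_zero.mp hmul).resolve_left ht
  have rel2 : ∀ i : Fin (2 * n + 1), c (i + 1) * g (i + 1) ζ = c i * g i ζ := by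
    intro i
    have hcont : ContinuousAt (B i) ζ := by
      exact ((((((continuousAt_id.sub continuousAt_const).mul
        ((hg1c i).add (hg1c (i + 1)))).add
        ((continuousAt_const.mul continuousAt_const).mul (hgc (i + 1)))).add
        ((continuousAt_id.sub continuousAt_const).mul ((hgc (i + 1)).pow 2))).sub
        ((continuousAt_const.mul continuousAt_const).mul (hgc i))).sub
        ((continuousAt_id.sub continuousAt_const).mul ((hgc i).pow 2))).sub
        (continuousAt_const.mul (continuousAt_id.sub continuousAt_const))
    have h0 : B i ζ = 0 := eval_zero_of_ev hcont
      (by filter_upwards [hUmem] with z hz using hB0 i z hz)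
    have hval : B i ζ = 2 * c (i + 1) * g (i + 1) ζ - 2 * c i * g i ζ := by
      simp only [hBdef, sub_self]
      ring
    rw [hval] at h0
    linear_combination h0 / 2
  have hsumc : ∑ j, c j = 0 := by
    set Gs : ℂ → ℂ := fun z =>
      (∑ j, (-(c j) + (z - ζ) ^ 2 * g1 j z)) + (Δ / 2) * (z - ζ) ^ 2 with hGsdef
    have hGs0 : ∀ z ∈ U, Gs z = 0 := by
      intro z hz
      simp only [hGsdef]
      rw [Finset.sum_congr rfl fun j _ => (key1 z hz j).symm, ← Finset.mul_sum, hsd z hz]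
      ring
    have hcont : ContinuousAt Gs ζ := by
      apply ContinuousAt.add
      · exact tendsto_finset_sum _ (fun j _ =>
          (continuousAt_const.neg).add ((hpowc ζ 2).mul (hg1c j)))
      · exact continuousAt_const.mul (hpowc ζ 2)
    have h0 : Gs ζ = 0 := eval_zero_of_ev hcont
      (by filter_upwards [hUmem] with z hz using hGs0 z hz)
    have hval : Gs ζ = -∑ j, c j := by
      simp only [hGsdef, sub_self]
      have hterm : ∀ j : Fin (2 * n + 1), -(c j) + (0 : ℂ) ^ 2 * g1 j ζ = -(c j) :=
        fun j => by ring
      rw [Finset.sum_congr rfl fun j _ => hterm j]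
      rw [Finset.sum_neg_distrib]
      ring
    rw [hval] at h0
    exact neg_eq_zero.mp h0
  have hstep : ∀ i : Fin (2 * n + 1), c (i + 1) = -c i ∨ c (i + 1) = c i + 1 := by
    intro i
    have hprod : (c i + c (i + 1)) * (c (i + 1) - c i - 1) = 0 := by
      linear_combination rel1 i
    rcases mul_eq_zero.mp hprod with hx | hx
    · left; linear_combination hx
    · right; linear_combination hx
  obtain ⟨M, hMc, ⟨i₀, hM0⟩, hMabs⟩ := comb_int n c hstep hsumc
  have hr : ∀ j, c j * g j ζ = 0 := by
    intro j
    have hconst : c j * g j ζ = c i₀ * g i₀ ζ :=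
      cyc_const (fun i => c i * g i ζ) (fun i => rel2 i) j i₀
    rw [hconst]
    have hci : c i₀ = 0 := by rw [hMc i₀, hM0]; simp
    rw [hci, zero_mul]
  intro j
  refine ⟨M j, g j, hMabs j, hana j, ?_, ?_⟩
  · filter_upwards [hUmem] with z hz
    rw [hrep2 j z hz, hMc j]
  · rw [← hMc j]; exact hr j
end MainProof
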